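/- Let A be an m × n integer matrix, c ∈ ℤ^m, X = {x ∈ ℕ^n : A x = c} and X₀ = {x ∈ ℕ^n : A x = 0}. Suppose X is nonempty. Then for a fixed index j ∈ {1,…,n}, the set of values {x(j) : x ∈ X} is unbounded if and only if there exists x₀ ∈ X₀ with x₀(j) > 0. -/

import Mathlib

/-- Let `A` be an `m × n` integer matrix, `c ∈ ℤ^m`, and let
`X = {x ∈ ℕ^n : A x = c}` and `X₀ = {x ∈ ℕ^n : A x = 0}`.  If `X` is
nonempty, then for a fixed index `j`, the set of values `{x(j) : x ∈ X}` is
unbounded if and only if there exists `x₀ ∈ X₀` with `x₀(j) > 0`. -/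
theorem stmt9 (m n : ℕ) (A : Matrix (Fin m) (Fin n) ℤ) (c : Fin m → ℤ)
    (j : Fin n)
    (hne : ∃ x : Fin n → ℕ, ∀ i, ∑ k, A i k * (x k : ℤ) = c i) :
    (∀ N : ℕ, ∃ x : Fin n → ℕ, (∀ i, ∑ k, A i k * (x k : ℤ) = c i) ∧ N ≤ x j)
      ↔ (∃ x₀ : Fin n → ℕ, (∀ i, ∑ k, A i k * (x₀ k : ℤ) = 0) ∧ 0 < x₀ j) := by
  constructor
  · intro h
    choose f hf hfj using h
    -- build indices with strictly increasing j-coordinate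
    let g : ℕ → ℕ := fun k => Nat.rec 0 (fun _ m => f m j + 1) k
    have hgsucc : ∀ k, g (k + 1) = f (g k) j + 1 := fun k => rfl
    have hmono : StrictMono (fun k => f (g k) j) := by
      apply strictMono_nat_of_lt_succ
      intro k
      have := hfj (g (k + 1))
      rw [hgsucc k] at this ⊢
      omega
    have hpwo : (Set.univ : Set (Fin n → ℕ)).IsPWO :=
      Set.isPWO_univ_iff.mpr inferInstance
    obtain ⟨a, b, hab, hle⟩ := hpwo.exists_lt (f := fun k => f (g k)) (fun _ => Set.mem_univ _)
    have hj : f (g a) j < f (g b) j := hmono hab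
    refine ⟨fun k => f (g b) k - f (g a) k, fun i => ?_, Nat.sub_pos_of_lt hj⟩
    have hcast : ∀ k, ((f (g b) k - f (g a) k : ℕ) : ℤ)
        = (f (g b) k : ℤ) - (f (g a) k : ℤ) := fun k => by
      have := hle k
      push_cast [Nat.cast_sub this]
      ring
    simp only [hcast, mul_sub, Finset.sum_sub_distrib, hf (g a) i, hf (g b) i, sub_self]
  · rintro ⟨x₀, h0, hj⟩ N
    obtain ⟨p, hp⟩ := hne
    refine ⟨fun k => p k + N * x₀ k, fun i => ?_, ?_⟩
    · have : ∑ k, A i k * ((p k : ℤ) + N * x₀ k)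
          = (∑ k, A i k * (p k : ℤ)) + N * ∑ k, A i k * (x₀ k : ℤ) := by
        rw [Finset.mul_sum, ← Finset.sum_add_distrib]
        apply Finset.sum_congr rfl
        intro k _
        ring
      calc ∑ k, A i k * ((p k + N * x₀ k : ℕ) : ℤ)
          = ∑ k, A i k * ((p k : ℤ) + N * x₀ k) := by push_cast; rfl
        _ = (∑ k, A i k * (p k : ℤ)) + N * ∑ k, A i k * (x₀ k : ℤ) := this
        _ = c i := by rw [hp i, h0 i, mul_zero, add_zero]
    · have : 1 ≤ x₀ j := hj
      calc N ≤ N * x₀ j := Nat.le_mul_of_pos_right N hj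
        _ ≤ p j + N * x₀ j := Nat.le_add_left _ _
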